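/- Let d be a positive integer, let h : ℤ^d → ℝ be any function, let x ∈ ℝ^d and let r > 0. Then there exists a function h̃ : ℤ^d → ℝ that agrees with h on ℤ^d ∩ B_r(x) and satisfies sup_{z ∈ ℤ^d} max_{1 ≤ i ≤ d} |h̃(z + e^{(i)}) − h̃(z)| ≤ √d · max_{z ∈ ℤ^d ∩ B_{r+√d}(x)} max_{1 ≤ i ≤ d} |h(z + e^{(i)}) − h(z)|. -/

import Mathlib

open MeasureTheory

/-- The canonical embedding of `ℤ^d` into Euclidean space `ℝ^d`. -/
def latticeEmbed (d : ℕ) (z : Fin d → ℤ) : EuclideanSpace ℝ (Fin d) :=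
  WithLp.toLp 2 (fun j => (z j : ℝ))

/-- `‖Δh‖_{ρ,∞}`: the supremum of `|h(z + e⁽ⁱ⁾) − h(z)|` over lattice points `z` in the
closed Euclidean ball of radius `ρ` centred at `x` and over coordinates `i`. -/
noncomputable def deltaNorm (d : ℕ) (h : (Fin d → ℤ) → ℝ)
    (x : EuclideanSpace ℝ (Fin d)) (ρ : ℝ) : ℝ :=
  sSup {v : ℝ | ∃ (z : Fin d → ℤ) (i : Fin d),
    dist (latticeEmbed d z) x ≤ ρ ∧ v = |h (z + Pi.single i 1) - h z|}

lemma latticeEmbed_dist (d : ℕ) (z : Fin d → ℤ) (y : EuclideanSpace ℝ (Fin d)) :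
    dist (latticeEmbed d z) y = Real.sqrt (∑ j, ((z j : ℝ) - y j) ^ 2) := by
  rw [EuclideanSpace.dist_eq]
  congr 1
  refine Finset.sum_congr rfl fun j _ => ?_
  rw [Real.dist_eq, sq_abs]
  rfl

lemma coord_le_dist (d : ℕ) (z : Fin d → ℤ) (y : EuclideanSpace ℝ (Fin d)) (j : Fin d) :
    |(z j : ℝ) - y j| ≤ dist (latticeEmbed d z) y := by
  rw [latticeEmbed_dist]
  have h1 : ((z j : ℝ) - y j) ^ 2 ≤ ∑ j', ((z j' : ℝ) - y j') ^ 2 :=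
    Finset.single_le_sum (f := fun j' => ((z j' : ℝ) - y j') ^ 2) (fun j' _ => sq_nonneg _) (Finset.mem_univ j)
  calc |(z j : ℝ) - y j| = Real.sqrt (((z j : ℝ) - y j) ^ 2) := (Real.sqrt_sq_eq_abs _).symm
    _ ≤ _ := Real.sqrt_le_sqrt h1

lemma ball_finite (d : ℕ) (x : EuclideanSpace ℝ (Fin d)) (ρ : ℝ) :
    {z : Fin d → ℤ | dist (latticeEmbed d z) x ≤ ρ}.Finite := by
  apply Set.Finite.subset (Set.Finite.pi (fun j : Fin d => Set.finite_Icc ⌈x j - ρ⌉ ⌊x j + ρ⌋))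
  intro z hz
  simp only [Set.mem_pi, Set.mem_univ, Set.mem_Icc, forall_true_left]
  intro j
  have h1 : |(z j : ℝ) - x j| ≤ ρ := (coord_le_dist d z x j).trans hz
  rw [abs_le] at h1
  constructor
  · exact Int.ceil_le.mpr (by linarith [h1.1])
  · exact Int.le_floor.mpr (by linarith [h1.2])

lemma deltaNorm_bddAbove (d : ℕ) (h : (Fin d → ℤ) → ℝ) (x : EuclideanSpace ℝ (Fin d)) (ρ : ℝ) :
    BddAbove {v : ℝ | ∃ (z : Fin d → ℤ) (i : Fin d),
      dist (latticeEmbed d z) x ≤ ρ ∧ v = |h (z + Pi.single i 1) - h z|} := by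
  apply Set.Finite.bddAbove
  have : {v : ℝ | ∃ (z : Fin d → ℤ) (i : Fin d),
      dist (latticeEmbed d z) x ≤ ρ ∧ v = |h (z + Pi.single i 1) - h z|} ⊆
      (fun p : (Fin d → ℤ) × Fin d => |h (p.1 + Pi.single p.2 1) - h p.1|) ''
        ({z | dist (latticeEmbed d z) x ≤ ρ} ×ˢ Set.univ) := by
    rintro v ⟨z, i, hz, rfl⟩
    exact ⟨(z, i), ⟨hz, trivial⟩, rfl⟩
  exact Set.Finite.subset (Set.Finite.image _ (Set.Finite.prod (ball_finite d x ρ) (Set.finite_univ))) this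

lemma le_deltaNorm (d : ℕ) (h : (Fin d → ℤ) → ℝ) (x : EuclideanSpace ℝ (Fin d)) (ρ : ℝ)
    (z : Fin d → ℤ) (i : Fin d) (hz : dist (latticeEmbed d z) x ≤ ρ) :
    |h (z + Pi.single i 1) - h z| ≤ deltaNorm d h x ρ :=
  le_csSup (deltaNorm_bddAbove d h x ρ) ⟨z, i, hz, rfl⟩

lemma deltaNorm_nonneg (d : ℕ) (hd : 0 < d) (h : (Fin d → ℤ) → ℝ)
    (x : EuclideanSpace ℝ (Fin d)) (ρ : ℝ) (hρ : Real.sqrt d ≤ ρ) :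
    0 ≤ deltaNorm d h x ρ := by
  set z₀ : Fin d → ℤ := fun j => round (x j) with hz₀
  have hdist : dist (latticeEmbed d z₀) x ≤ ρ := by
    rw [latticeEmbed_dist]
    refine le_trans ?_ hρ
    apply Real.sqrt_le_sqrt
    calc ∑ j, ((z₀ j : ℝ) - x j) ^ 2 ≤ ∑ _j : Fin d, (1:ℝ) := by
          refine Finset.sum_le_sum fun j _ => ?_
          have : |(z₀ j : ℝ) - x j| ≤ 1 := by
            have := abs_sub_round (x j)
            rw [abs_sub_comm] at this
            exact this.trans (by norm_num)
          calc ((z₀ j : ℝ) - x j) ^ 2 = |(z₀ j : ℝ) - x j| ^ 2 := (sq_abs _).symm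
            _ ≤ 1 ^ 2 := by apply pow_le_pow_left₀ (abs_nonneg _) this
            _ = 1 := one_pow 2
      _ = (d : ℝ) := by simp
  exact le_trans (abs_nonneg _) (le_deltaNorm d h x ρ z₀ ⟨0, hd⟩ hdist)

lemma step_lemma (d : ℕ) (h : (Fin d → ℤ) → ℝ) (x : EuclideanSpace ℝ (Fin d)) (ρ : ℝ)
    (a b : Fin d → ℤ) (i : Fin d) (s : ℤ) (hs : s = if a i < b i then 1 else -1)
    (hne : a i ≠ b i)
    (hcond : (s : ℝ) * ((a i : ℝ) - x i) ≤ -(1/2))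
    (ha : dist (latticeEmbed d a) x ≤ ρ) :
    ∃ a' : Fin d → ℤ,
      dist (latticeEmbed d a') x ≤ ρ ∧
      |h a' - h a| ≤ deltaNorm d h x ρ ∧
      (∑ j, (a' j - b j).natAbs) + 1 = ∑ j, (a j - b j).natAbs := by
  refine ⟨Function.update a i (a i + s), ?_, ?_, ?_⟩
  case refine_1 =>
    refine le_trans ?_ ha
    rw [latticeEmbed_dist, latticeEmbed_dist]
    apply Real.sqrt_le_sqrt
    have hsplit : ∀ g : Fin d → ℝ, ∑ j, g j = g i + ∑ j ∈ Finset.univ.erase i, g j :=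
      fun g => (Finset.add_sum_erase _ g (Finset.mem_univ i)).symm
    rw [hsplit (fun j => ((Function.update a i (a i + s) j : ℝ) - x j) ^ 2),
        hsplit (fun j => ((a j : ℝ) - x j) ^ 2)]
    have herase : ∑ j ∈ Finset.univ.erase i, ((Function.update a i (a i + s) j : ℝ) - x j) ^ 2
        = ∑ j ∈ Finset.univ.erase i, ((a j : ℝ) - x j) ^ 2 := by
      refine Finset.sum_congr rfl fun j hj => ?_
      rw [Function.update_of_ne (Finset.ne_of_mem_erase hj)]
    rw [herase]
    have hcoord : ((Function.update a i (a i + s) i : ℝ) - x i) ^ 2 ≤ ((a i : ℝ) - x i) ^ 2 := by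
      rw [Function.update_self]
      have hs2 : (s : ℝ) ^ 2 = 1 := by
        rcases lt_or_ge (a i) (b i) with hlt | hlt <;> simp [hs, hlt, not_lt.mpr]
      have hsq : (s : ℝ) ^ 2 = 1 := hs2
      push_cast
      nlinarith [hcond, hsq]
    linarith
  case refine_2 =>
    by_cases hlt : a i < b i
    · have hs1 : s = 1 := by simp [hs, hlt]
      have heq : Function.update a i (a i + s) = a + Pi.single i 1 := by
        funext j
        by_cases hj : j = i
        · subst hj; simp [hs1]
        · simp [Function.update_of_ne hj, Pi.single_apply, hj]
      rw [heq]
      exact le_deltaNorm d h x ρ a i ha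
    · have hs1 : s = -1 := by simp [hs, hlt]
      have heq : a = Function.update a i (a i + s) + Pi.single i 1 := by
        funext j
        by_cases hj : j = i
        · subst hj; simp [hs1]
        · simp [Function.update_of_ne hj, Pi.single_apply, hj]
      rw [abs_sub_comm]
      nth_rewrite 1 [heq]
      apply le_deltaNorm d h x ρ _ i
      -- distance bound for the updated point, same as refine_1
      refine le_trans ?_ ha
      rw [latticeEmbed_dist, latticeEmbed_dist]
      apply Real.sqrt_le_sqrt
      have hsplit : ∀ g : Fin d → ℝ, ∑ j, g j = g i + ∑ j ∈ Finset.univ.erase i, g j :=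
        fun g => (Finset.add_sum_erase _ g (Finset.mem_univ i)).symm
      rw [hsplit (fun j => ((Function.update a i (a i + s) j : ℝ) - x j) ^ 2),
          hsplit (fun j => ((a j : ℝ) - x j) ^ 2)]
      have herase : ∑ j ∈ Finset.univ.erase i, ((Function.update a i (a i + s) j : ℝ) - x j) ^ 2
          = ∑ j ∈ Finset.univ.erase i, ((a j : ℝ) - x j) ^ 2 := by
        refine Finset.sum_congr rfl fun j hj => ?_
        rw [Function.update_of_ne (Finset.ne_of_mem_erase hj)]
      rw [herase]
      have hcoord : ((Function.update a i (a i + s) i : ℝ) - x i) ^ 2 ≤ ((a i : ℝ) - x i) ^ 2 := by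
        rw [Function.update_self]
        have hsq : (s : ℝ) ^ 2 = 1 := by rw [hs1]; norm_num
        push_cast
        nlinarith [hcond, hsq]
      linarith
  case refine_3 =>
    have hsplitn : ∀ g : Fin d → ℕ, ∑ j, g j = g i + ∑ j ∈ Finset.univ.erase i, g j :=
      fun g => (Finset.add_sum_erase _ g (Finset.mem_univ i)).symm
    rw [hsplitn (fun j => (Function.update a i (a i + s) j - b j).natAbs),
        hsplitn (fun j => (a j - b j).natAbs)]
    have herase : ∑ j ∈ Finset.univ.erase i, (Function.update a i (a i + s) j - b j).natAbs
        = ∑ j ∈ Finset.univ.erase i, (a j - b j).natAbs := by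
      refine Finset.sum_congr rfl fun j hj => ?_
      rw [Function.update_of_ne (Finset.ne_of_mem_erase hj)]
    rw [herase, Function.update_self]
    have : (a i + s - b i).natAbs + 1 = (a i - b i).natAbs := by
      by_cases hlt : a i < b i
      · have hs1 : s = 1 := by simp [hs, hlt]
        omega
      · have hs1 : s = -1 := by simp [hs, hlt]
        have : b i < a i := lt_of_le_of_ne (not_lt.mp hlt) (Ne.symm hne)
        omega
    omega

lemma walk_lemma (d : ℕ) (h : (Fin d → ℤ) → ℝ) (x : EuclideanSpace ℝ (Fin d)) (ρ : ℝ) :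
    ∀ n : ℕ, ∀ a b : Fin d → ℤ, (∑ j, (a j - b j).natAbs) = n →
    dist (latticeEmbed d a) x ≤ ρ → dist (latticeEmbed d b) x ≤ ρ →
    |h a - h b| ≤ n * deltaNorm d h x ρ := by
  intro n
  induction n with
  | zero =>
    intro a b hsum _ _
    have hab : a = b := by
      funext j
      have := Finset.sum_eq_zero_iff.mp hsum j (Finset.mem_univ j)
      omega
    simp [hab]
  | succ n ih =>
    intro a b hsum ha hb
    have hex : ∃ i, a i ≠ b i := by
      by_contra hno
      push_neg at hno
      have : (∑ j, (a j - b j).natAbs) = 0 :=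
        Finset.sum_eq_zero fun j _ => by rw [hno j]; simp
      omega
    obtain ⟨i, hi⟩ := hex
    set s : ℤ := if a i < b i then 1 else -1 with hs
    by_cases hc : (s : ℝ) * ((a i : ℝ) - x i) ≤ -(1/2)
    · obtain ⟨a', ha', hinc, hsum'⟩ := step_lemma d h x ρ a b i s hs hi hc ha
      have hrec := ih a' b (by omega) ha' hb
      have htri : |h a - h b| ≤ |h a' - h a| + |h a' - h b| := by
        rw [abs_sub_comm (h a') (h a)]
        exact abs_sub_le (h a) (h a') (h b)
      push_cast
      push_cast at hrec
      linarith
    · -- step from b towards a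
      have hsb : -s = if b i < a i then 1 else -1 := by
        rcases lt_or_ge (a i) (b i) with hlt | hge
        · simp [hs, hlt, not_lt.mpr (le_of_lt hlt)]
        · have hlt' : b i < a i := lt_of_le_of_ne hge (Ne.symm hi)
          simp [hs, hlt', not_lt.mpr (le_of_lt hlt')]
      have hcond' : ((-s : ℤ) : ℝ) * ((b i : ℝ) - x i) ≤ -(1/2) := by
        push_neg at hc
        have hstep : (s : ℝ) * ((b i : ℝ) - (a i : ℝ)) ≥ 1 := by
          rcases lt_or_ge (a i) (b i) with hlt | hge
          · have : (1:ℤ) ≤ b i - a i := by omega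
            have h1 : (1:ℝ) ≤ (b i : ℝ) - (a i : ℝ) := by exact_mod_cast this
            simp only [hs, if_pos hlt]
            push_cast
            linarith
          · have hlt' : b i < a i := lt_of_le_of_ne hge (Ne.symm hi)
            have : (1:ℤ) ≤ a i - b i := by omega
            have h1 : (1:ℝ) ≤ (a i : ℝ) - (b i : ℝ) := by exact_mod_cast this
            simp only [hs, if_neg (not_lt.mpr (le_of_lt hlt')), Int.cast_neg, Int.cast_one]
            linarith
        push_cast
        nlinarith [hc, hstep]
      obtain ⟨b', hb', hinc, hsum'⟩ := step_lemma d h x ρ b a i (-s) hsb (Ne.symm hi) hcond' hb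
      have hsymm : ∀ u v : Fin d → ℤ, (∑ j, (u j - v j).natAbs) = ∑ j, (v j - u j).natAbs :=
        fun u v => Finset.sum_congr rfl fun j _ => by omega
      have hrec := ih a b' (by rw [hsymm a b']; rw [hsymm a b] at hsum; omega) ha hb'
      have htri : |h a - h b| ≤ |h a - h b'| + |h b' - h b| := abs_sub_le (h a) (h b') (h b)
      push_cast
      push_cast at hrec
      linarith

lemma l1_le_sqrt (d : ℕ) (a b : Fin d → ℤ) :
    (∑ j, ((a j - b j).natAbs : ℝ)) ≤
      Real.sqrt d * dist (latticeEmbed d a) (latticeEmbed d b) := by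
  have hcast : ∀ j, (((a j - b j).natAbs : ℝ)) = |(a j : ℝ) - (b j : ℝ)| := by
    intro j
    rw [Nat.cast_natAbs]
    push_cast
    rfl
  have hdist : dist (latticeEmbed d a) (latticeEmbed d b)
      = Real.sqrt (∑ j, ((a j : ℝ) - (b j : ℝ)) ^ 2) := latticeEmbed_dist d a (latticeEmbed d b)
  rw [hdist]
  have hcs : (∑ j, |(a j : ℝ) - (b j : ℝ)|) ^ 2
      ≤ (d : ℝ) * ∑ j, ((a j : ℝ) - (b j : ℝ)) ^ 2 := by
    have := sq_sum_le_card_mul_sum_sq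
      (s := (Finset.univ : Finset (Fin d))) (f := fun j => |(a j : ℝ) - (b j : ℝ)|)
    simpa [sq_abs] using this
  have hnn : 0 ≤ ∑ j, |(a j : ℝ) - (b j : ℝ)| :=
    Finset.sum_nonneg fun j _ => abs_nonneg _
  calc (∑ j, ((a j - b j).natAbs : ℝ)) = ∑ j, |(a j : ℝ) - (b j : ℝ)| :=
        Finset.sum_congr rfl fun j _ => hcast j
    _ = Real.sqrt ((∑ j, |(a j : ℝ) - (b j : ℝ)|) ^ 2) := (Real.sqrt_sq hnn).symm
    _ ≤ Real.sqrt ((d : ℝ) * ∑ j, ((a j : ℝ) - (b j : ℝ)) ^ 2) := Real.sqrt_le_sqrt hcs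
    _ = Real.sqrt d * Real.sqrt (∑ j, ((a j : ℝ) - (b j : ℝ)) ^ 2) :=
        Real.sqrt_mul (by positivity) _

lemma round_dist (d : ℕ) (x : EuclideanSpace ℝ (Fin d)) :
    dist (latticeEmbed d (fun j => round (x j))) x ≤ Real.sqrt d := by
  rw [latticeEmbed_dist]
  apply Real.sqrt_le_sqrt
  calc ∑ j, (((round (x j) : ℤ) : ℝ) - x j) ^ 2 ≤ ∑ _j : Fin d, (1:ℝ) := by
        refine Finset.sum_le_sum fun j _ => ?_
        have h1 : |((round (x j) : ℤ) : ℝ) - x j| ≤ 1 := by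
          have := abs_sub_round (x j)
          rw [abs_sub_comm] at this
          exact this.trans (by norm_num)
        calc (((round (x j) : ℤ) : ℝ) - x j) ^ 2 = |((round (x j) : ℤ) : ℝ) - x j| ^ 2 :=
              (sq_abs _).symm
          _ ≤ 1 ^ 2 := by apply pow_le_pow_left₀ (abs_nonneg _) h1
          _ = 1 := one_pow 2
    _ = (d : ℝ) := by simp

lemma dist_single (d : ℕ) (z : Fin d → ℤ) (i : Fin d) :
    dist (latticeEmbed d (z + Pi.single i 1)) (latticeEmbed d z) = 1 := by
  set u : Fin d → ℤ := z + Pi.single i 1 with hu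
  rw [latticeEmbed_dist]
  have hterm : ∀ j : Fin d, (((u j : ℤ) : ℝ) - (latticeEmbed d z) j) ^ 2
      = if j = i then 1 else 0 := by
    intro j
    have happ : u j = z j + (Pi.single i 1 : Fin d → ℤ) j := by rw [hu]; rfl
    have hlz : (latticeEmbed d z) j = ((z j : ℤ) : ℝ) := rfl
    rw [happ, hlz, Pi.single_apply]
    by_cases hj : j = i <;> simp [hj]
  rw [Finset.sum_congr rfl fun j _ => hterm j]
  simp

theorem extension_lemma (d : ℕ) (hd : 0 < d) (h : (Fin d → ℤ) → ℝ)
    (x : EuclideanSpace ℝ (Fin d)) (r : ℝ) (hr : 0 < r) :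
    ∃ ht : (Fin d → ℤ) → ℝ,
      (∀ z : Fin d → ℤ, dist (latticeEmbed d z) x ≤ r → ht z = h z) ∧
      (∀ (z : Fin d → ℤ) (i : Fin d),
        |ht (z + Pi.single i 1) - ht z|
          ≤ Real.sqrt d * deltaNorm d h x (r + Real.sqrt d)) := by
  set ρ : ℝ := r + Real.sqrt d with hρ
  have hsd1 : (1:ℝ) ≤ Real.sqrt d := by
    rw [show (1:ℝ) = Real.sqrt 1 from Real.sqrt_one.symm]
    exact Real.sqrt_le_sqrt (by exact_mod_cast hd)
  have hrρ : r ≤ ρ := by rw [hρ]; linarith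
  set M : ℝ := deltaNorm d h x ρ with hM
  have hM0 : 0 ≤ M := deltaNorm_nonneg d hd h x ρ (by rw [hρ]; linarith)
  set K : ℝ := Real.sqrt d * M with hK
  have hK0 : 0 ≤ K := mul_nonneg (Real.sqrt_nonneg _) hM0
  set Sfin : Finset (Fin d → ℤ) := (ball_finite d x ρ).toFinset with hSfin
  have hmem : ∀ z : Fin d → ℤ, z ∈ Sfin ↔ dist (latticeEmbed d z) x ≤ ρ := by
    intro z; rw [hSfin, Set.Finite.mem_toFinset]; rfl
  have hSne : Sfin.Nonempty :=
    ⟨fun j => round (x j), (hmem _).mpr ((round_dist d x).trans (by rw [hρ]; linarith))⟩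
  set ht : (Fin d → ℤ) → ℝ := fun z =>
    Sfin.inf' hSne (fun w => h w + K * dist (latticeEmbed d z) (latticeEmbed d w)) with hht
  -- h is K-Lipschitz (in embedded Euclidean distance) on Sfin
  have hlip : ∀ z w : Fin d → ℤ, dist (latticeEmbed d z) x ≤ ρ →
      dist (latticeEmbed d w) x ≤ ρ →
      h z - h w ≤ K * dist (latticeEmbed d z) (latticeEmbed d w) := by
    intro z w hz hw
    have hwalk := walk_lemma d h x ρ (∑ j, (z j - w j).natAbs) z w rfl hz hw
    have hl1 := l1_le_sqrt d z w
    have hcast : ((∑ j, (z j - w j).natAbs : ℕ) : ℝ) = ∑ j, ((z j - w j).natAbs : ℝ) := by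
      push_cast; rfl
    have h1 : |h z - h w| ≤ (∑ j, ((z j - w j).natAbs : ℝ)) * M := by
      rw [← hcast]; exact hwalk
    have h2 : (∑ j, ((z j - w j).natAbs : ℝ)) * M
        ≤ (Real.sqrt d * dist (latticeEmbed d z) (latticeEmbed d w)) * M :=
      mul_le_mul_of_nonneg_right hl1 hM0
    have := (abs_le.mp (h1.trans h2)).2
    rw [hK]; linarith [this]
  -- key one-sided Lipschitz bound for ht
  have hkey : ∀ u v : Fin d → ℤ,
      ht u ≤ ht v + K * dist (latticeEmbed d u) (latticeEmbed d v) := by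
    intro u v
    obtain ⟨w, hw, hwe⟩ := Sfin.exists_mem_eq_inf' hSne
      (fun w => h w + K * dist (latticeEmbed d v) (latticeEmbed d w))
    have h1 : ht u ≤ h w + K * dist (latticeEmbed d u) (latticeEmbed d w) :=
      Finset.inf'_le _ hw
    have htr : dist (latticeEmbed d u) (latticeEmbed d w)
        ≤ dist (latticeEmbed d u) (latticeEmbed d v)
          + dist (latticeEmbed d v) (latticeEmbed d w) := dist_triangle _ _ _
    have h2 : K * dist (latticeEmbed d u) (latticeEmbed d w)
        ≤ K * (dist (latticeEmbed d u) (latticeEmbed d v)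
          + dist (latticeEmbed d v) (latticeEmbed d w)) :=
      mul_le_mul_of_nonneg_left htr hK0
    have h3 : ht v = h w + K * dist (latticeEmbed d v) (latticeEmbed d w) := hwe
    rw [h3]; ring_nf; ring_nf at h1 h2; linarith
  refine ⟨ht, ?_, ?_⟩
  · intro z hz
    have hzρ : dist (latticeEmbed d z) x ≤ ρ := hz.trans hrρ
    have hzS : z ∈ Sfin := (hmem z).mpr hzρ
    apply le_antisymm
    · have := Finset.inf'_le (f := fun w => h w + K * dist (latticeEmbed d z) (latticeEmbed d w))
        hzS
      calc ht z ≤ h z + K * dist (latticeEmbed d z) (latticeEmbed d z) := this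
        _ = h z := by rw [dist_self]; ring
    · apply Finset.le_inf'
      intro w hw
      have hwρ : dist (latticeEmbed d w) x ≤ ρ := (hmem w).mp hw
      have := hlip z w hzρ hwρ
      linarith
  · intro z i
    have hd1 : dist (latticeEmbed d (z + Pi.single i 1)) (latticeEmbed d z) = 1 :=
      dist_single d z i
    have h1 := hkey (z + Pi.single i 1) z
    have h2 := hkey z (z + Pi.single i 1)
    rw [hd1] at h1
    rw [dist_comm, hd1] at h2
    rw [abs_le]
    constructor <;> [linarith; linarith]
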